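/- Every factor of the Thue-Morse word is overlap-free; in particular, the central word t(2^(2n+1)−1) ⋯ t(1) t(0) t(0) t(1) ⋯ t(2^(2n+1)−1) of the two-sided Thue-Morse word equals μ^(2n+2)(1) and is overlap-free. -/

import Mathlib

/-- Thue-Morse sequence: parity of number of 1 bits of n. -/
def t (n : ℕ) : Fin 2 := ⟨(Nat.digits 2 n).sum % 2, Nat.mod_lt _ (by norm_num)⟩

/-- Two-sided Thue-Morse word. -/
def u (n : ℤ) : Fin 2 := if 0 ≤ n then t n.toNat else t (-1 - n).toNat

/-- Thue-Morse morphism on letters: 0 ↦ 01, 1 ↦ 10. -/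
def muL : Fin 2 → List (Fin 2) := fun a => if a = 0 then [0, 1] else [1, 0]

/-- The morphism ν on letters: 0 ↦ 10, 1 ↦ 01. -/
def nuL : Fin 2 → List (Fin 2) := fun a => if a = 0 then [1, 0] else [0, 1]

/-- k-fold iterate of μ applied to a word. -/
def muIter (k : ℕ) (w : List (Fin 2)) : List (Fin 2) := (fun v => v.flatMap muL)^[k] w

/-- k-fold iterate of ν applied to a word. -/
def nuIter (k : ℕ) (w : List (Fin 2)) : List (Fin 2) := (fun v => v.flatMap nuL)^[k] w



lemma t_zero : t 0 = 0 := by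
  apply Fin.ext; show (Nat.digits 2 0).sum % 2 = 0; simp

lemma t_two_mul (m : ℕ) : t (2 * m) = t m := by
  rcases Nat.eq_zero_or_pos m with h | h
  · subst h; rfl
  · apply Fin.ext
    show (Nat.digits 2 (2 * m)).sum % 2 = (Nat.digits 2 m).sum % 2
    rw [Nat.digits_def' (by norm_num : 1 < 2) (by positivity)]
    simp [Nat.mul_mod_right, Nat.mul_div_cancel_left _ (by norm_num : 0 < 2)]

lemma t_two_mul_add_one (m : ℕ) : t (2 * m + 1) = t m + 1 := by
  apply Fin.ext
  show (Nat.digits 2 (2 * m + 1)).sum % 2 = _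
  rw [Nat.digits_def' (by norm_num : 1 < 2) (by omega)]
  have h1 : (2 * m + 1) % 2 = 1 := by omega
  have h2 : (2 * m + 1) / 2 = m := by omega
  rw [h1, h2]
  have : ((t m + 1 : Fin 2)).val = ((t m).val + 1) % 2 := by
    simp [Fin.add_def]
  rw [this]
  show (1 + (Nat.digits 2 m).sum) % 2 = ((Nat.digits 2 m).sum % 2 + 1) % 2
  omega

lemma tv_lt (n : ℕ) : (t n).val < 2 := (t n).isLt

lemma tv0 (m : ℕ) : (t (2 * m)).val = (t m).val := congrArg Fin.val (t_two_mul m)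

lemma tv1 (m : ℕ) : (t (2 * m + 1)).val = ((t m).val + 1) % 2 := by
  rw [t_two_mul_add_one]; simp [Fin.add_def]

lemma adj_ne (m : ℕ) : t (2 * m) ≠ t (2 * m + 1) := by
  intro h
  have h' := congrArg Fin.val h
  rw [tv0, tv1] at h'
  have := tv_lt m
  omega

lemma no_overlap : ∀ p, 1 ≤ p → ∀ i, ¬ (∀ j ≤ p, t (i + j) = t (i + p + j)) := by
  intro p
  induction p using Nat.strong_induction_on with
  | _ p IH =>
    intro hp i H
    rcases Nat.even_or_odd p with ⟨q, hq⟩ | ⟨s, hs⟩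
    · -- p even, p = q + q, reduce to period q
      have hq1 : 1 ≤ q := by omega
      have key : ∀ m0 : ℕ, (∀ j ≤ q, t (m0 + j) = t (m0 + q + j)) → False := by
        intro m0 H2
        exact IH q (by omega) hq1 m0 H2
      rcases Nat.even_or_odd i with ⟨r, hr⟩ | ⟨r, hr⟩
      · apply key r
        intro j hj
        have h1 := H (2 * j) (by omega)
        have e1 : i + 2 * j = 2 * (r + j) := by omega
        have e2 : i + p + 2 * j = 2 * (r + q + j) := by omega
        rw [e1, e2, t_two_mul, t_two_mul] at h1
        exact h1
      · apply key r
        intro j hj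
        have h1 := H (2 * j) (by omega)
        have e1 : i + 2 * j = 2 * (r + j) + 1 := by omega
        have e2 : i + p + 2 * j = 2 * (r + q + j) + 1 := by omega
        rw [e1, e2, t_two_mul_add_one, t_two_mul_add_one] at h1
        exact add_right_cancel h1
    · -- p odd
      by_cases hc : ∃ j, j < p ∧ t (i + j) = t (i + j + 1)
      · obtain ⟨j, hjp, hadj⟩ := hc
        have h1 := H j (by omega)
        have h2 := H (j + 1) (by omega)
        have e : i + (j + 1) = i + j + 1 := by omega
        rw [e] at h2
        have e2 : i + p + (j + 1) = i + p + j + 1 := by omega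
        rw [e2] at h2
        have hadj2 : t (i + p + j) = t (i + p + j + 1) := by
          rw [← h1, ← h2, hadj]
        rcases Nat.even_or_odd (i + j) with ⟨r, hr⟩ | ⟨r, hr⟩
        · apply adj_ne r
          have e1 : i + j = 2 * r := by omega
          have e2 : i + j + 1 = 2 * r + 1 := by omega
          rw [e1] at hadj
          exact hadj
        · apply adj_ne (r + s + 1)
          have e1 : i + p + j = 2 * (r + s + 1) := by omega
          have e2 : i + p + j + 1 = 2 * (r + s + 1) + 1 := by omega
          rw [e1] at hadj2
          exact hadj2
      · push_neg at hc
        have alt : ∀ j ≤ p, (t (i + j)).val = ((t i).val + j) % 2 := by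
          intro j
          induction j with
          | zero =>
            intro _
            have := tv_lt i
            simp only [Nat.add_zero]
            omega
          | succ j ihj =>
            intro hj
            have hv := ihj (by omega)
            have hne := hc j (by omega)
            have hne' : (t (i + j)).val ≠ (t (i + j + 1)).val := fun h => hne (Fin.ext h)
            have l1 := tv_lt (i + j)
            have l2 := tv_lt (i + j + 1)
            have l3 := tv_lt i
            have e : i + (j + 1) = i + j + 1 := by omega
            rw [e]
            omega
        have hvp := alt p le_rfl
        have h0 := H 0 (by omega)
        simp only [Nat.add_zero] at h0
        have h0' := congrArg Fin.val h0
        have l3 := tv_lt i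
        rw [hvp] at h0'
        omega

lemma t_pow_add : ∀ e k, k < 2 ^ e → t (2 ^ e + k) = t k + 1 := by
  intro e
  induction e with
  | zero =>
    intro k hk
    interval_cases k
    have : (2 : ℕ) ^ 0 + 0 = 2 * 0 + 1 := by norm_num
    rw [this, t_two_mul_add_one]
  | succ e ih =>
    intro k hk
    rcases Nat.even_or_odd k with ⟨q, hq⟩ | ⟨q, hq⟩
    · have hq' : q < 2 ^ e := by
        have : 2 ^ (e + 1) = 2 * 2 ^ e := by ring
        omega
      have e1 : 2 ^ (e + 1) + k = 2 * (2 ^ e + q) := by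
        have : 2 ^ (e + 1) = 2 * 2 ^ e := by ring
        omega
      have e2 : k = 2 * q := by omega
      rw [e1, t_two_mul, ih q hq', e2, t_two_mul]
    · have hq' : q < 2 ^ e := by
        have : 2 ^ (e + 1) = 2 * 2 ^ e := by ring
        omega
      have e1 : 2 ^ (e + 1) + k = 2 * (2 ^ e + q) + 1 := by
        have : 2 ^ (e + 1) = 2 * 2 ^ e := by ring
        omega
      have e2 : k = 2 * q + 1 := by omega
      rw [e1, t_two_mul_add_one, ih q hq', e2, t_two_mul_add_one]

lemma t_rev : ∀ e k, k < 2 ^ e → (t (2 ^ e - 1 - k)).val = ((t k).val + e) % 2 := by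
  intro e
  induction e with
  | zero =>
    intro k hk
    interval_cases k
    simp [Nat.mod_eq_of_lt (tv_lt 0)]
  | succ e ih =>
    intro k hk
    have h2e : 2 ^ (e + 1) = 2 * 2 ^ e := by ring
    have hpos : 1 ≤ 2 ^ e := Nat.one_le_two_pow
    rcases Nat.even_or_odd k with ⟨q, hq⟩ | ⟨q, hq⟩
    · have hq' : q < 2 ^ e := by omega
      have e1 : 2 ^ (e + 1) - 1 - k = 2 * (2 ^ e - 1 - q) + 1 := by omega
      have e2 : k = 2 * q := by omega
      rw [e1, tv1, ih q hq', e2, tv0]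
      omega
    · have hq' : q < 2 ^ e := by omega
      have e1 : 2 ^ (e + 1) - 1 - k = 2 * (2 ^ e - 1 - q) := by omega
      have e2 : k = 2 * q + 1 := by omega
      rw [e1, tv0, ih q hq', e2, tv1]
      omega

lemma muIter_append (m : ℕ) : ∀ v w : List (Fin 2),
    muIter m (v ++ w) = muIter m v ++ muIter m w := by
  induction m with
  | zero => intro v w; rfl
  | succ m ih =>
    intro v w
    simp only [muIter, Function.iterate_succ_apply] at *
    rw [List.flatMap_append]
    exact ih _ _

lemma muL_eq (a : Fin 2) : muL a = [a, a + 1] := by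
  fin_cases a <;> rfl

lemma muIter_single (m : ℕ) : ∀ a : Fin 2,
    muIter m [a] = (List.range (2 ^ m)).map (fun k => t k + a) := by
  induction m with
  | zero =>
    intro a
    show [a] = [t 0 + a]
    rw [t_zero, zero_add]
  | succ m ih =>
    intro a
    have step : muIter (m + 1) [a] = muIter m ([a] ++ [a + 1]) := by
      simp only [muIter, Function.iterate_succ_apply]
      congr 1
      simp [List.flatMap, muL_eq]
    rw [step, muIter_append, ih a, ih (a + 1)]
    have h2 : 2 ^ (m + 1) = 2 ^ m + 2 ^ m := by ring
    rw [h2, List.range_add, List.map_append, List.map_map]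
    congr 1
    apply List.map_congr_left
    intro k hk
    have hk' : k < 2 ^ m := List.mem_range.mp hk
    show t k + (a + 1) = t (2 ^ m + k) + a
    rw [t_pow_add m k hk']
    abel

lemma fin2_flip : ∀ a b : Fin 2, a = b + 1 → b = a + 1 := by decide

theorem factors_overlap_free_and_central_word (n : ℕ) :
    (∀ (i p : ℕ), 1 ≤ p → ¬ ∀ j ≤ p, t (i + j) = t (i + p + j)) ∧
    (∀ k : ℕ, k < 2 ^ (2 * n + 2) →
      u (-(2 ^ (2 * n + 1) : ℤ) + (k : ℤ)) = (muIter (2 * n + 2) [1]).getD k 0) := by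
  constructor
  · exact fun i p hp => no_overlap p hp i
  · intro k hk
    set A : ℕ := 2 ^ (2 * n + 1) with hAdef
    have hA : ((A : ℕ) : ℤ) = (2 : ℤ) ^ (2 * n + 1) := by push_cast [hAdef]; ring
    have hk2 : k < 2 * A := by
      have : 2 ^ (2 * n + 2) = 2 * A := by rw [hAdef]; ring
      omega
    have hrhs : (muIter (2 * n + 2) [1]).getD k 0 = t k + 1 := by
      rw [muIter_single]
      have hlen : k < ((List.range (2 ^ (2 * n + 2))).map (fun k => t k + 1)).length := by
        simpa using hk
      rw [List.getD_eq_getElem _ _ hlen]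
      simp
    rw [hrhs]
    by_cases hlt : k < A
    · have hneg : ¬ (0 ≤ -(2 ^ (2 * n + 1) : ℤ) + (k : ℤ)) := by
        rw [← hA]; omega
      rw [u, if_neg hneg]
      have htn : (-1 - (-(2 ^ (2 * n + 1) : ℤ) + (k : ℤ))).toNat = A - 1 - k := by
        rw [← hA]; omega
      rw [htn]
      apply Fin.ext
      rw [t_rev (2 * n + 1) k (by rw [← hAdef]; exact hlt)]
      have : ((t k + 1 : Fin 2)).val = ((t k).val + 1) % 2 := by simp [Fin.add_def]
      rw [this]
      omega
    · have hpos : (0 ≤ -(2 ^ (2 * n + 1) : ℤ) + (k : ℤ)) := by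
        rw [← hA]; omega
      rw [u, if_pos hpos]
      have htn : ((-(2 ^ (2 * n + 1) : ℤ) + (k : ℤ))).toNat = k - A := by
        rw [← hA]; omega
      rw [htn]
      have hk' : k - A < 2 ^ (2 * n + 1) := by omega
      have := t_pow_add (2 * n + 1) (k - A) hk'
      have he : 2 ^ (2 * n + 1) + (k - A) = k := by omega
      rw [he] at this
      exact fin2_flip _ _ this
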